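/- Any code C ⊆ F_{q^m}^N (linear or nonlinear, with |C| ≥ 2) with sum-rank length partition N = r_1 + ... + r_g satisfies the Singleton-type bound |C| ≤ q^{m(N − d_SR(C) + 1)}. -/
import Mathlib

open Finset Module Submodule


/-- Sum-rank weight of a block vector over `Fq`: sum over the blocks of the
`Fq`-rank of the block (i.e. the `Fq`-dimension of the span of its entries). -/
noncomputable def srWeight (Fq : Type*) [Field Fq] {F : Type*} [Field F] [Algebra Fq F]
    {g : ℕ} {r : Fin g → ℕ} (c : ∀ i : Fin g, Fin (r i) → F) : ℕ :=
  ∑ i, Module.finrank Fq (Submodule.span Fq (Set.range (c i)))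

/-- Minimum sum-rank distance of a (possibly nonlinear) code. -/
noncomputable def srMinDist (Fq : Type*) [Field Fq] {F : Type*} [Field F] [Algebra Fq F]
    {g : ℕ} {r : Fin g → ℕ} (C : Set (∀ i : Fin g, Fin (r i) → F)) : ℕ :=
  sInf {w | ∃ c ∈ C, ∃ d ∈ C, c ≠ d ∧ w = srWeight Fq (c - d)}

/-- Hamming weight of a block vector. -/
noncomputable def hamWeight {F : Type*} [Field F] [DecidableEq F]
    {g : ℕ} {r : Fin g → ℕ} (c : ∀ i : Fin g, Fin (r i) → F) : ℕ :=
  ∑ i, (Finset.univ.filter fun j => c i j ≠ 0).card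

/-- Minimum Hamming distance of a (possibly nonlinear) code. -/
noncomputable def hamMinDist {F : Type*} [Field F] [DecidableEq F]
    {g : ℕ} {r : Fin g → ℕ} (C : Set (∀ i : Fin g, Fin (r i) → F)) : ℕ :=
  sInf {w | ∃ c ∈ C, ∃ d ∈ C, c ≠ d ∧ w = hamWeight (c - d)}

/-- Blockwise multiplication of a block vector by a block-diagonal matrix
`diag(A_1, …, A_g)` with entries in the subfield `Fq`. -/
noncomputable def blockMul {Fq F : Type*} [Field Fq] [Field F] [Algebra Fq F]
    {g : ℕ} {r n : Fin g → ℕ} (c : ∀ i : Fin g, Fin (r i) → F)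
    (A : ∀ i : Fin g, Matrix (Fin (r i)) (Fin (n i)) Fq) :
    ∀ i : Fin g, Fin (n i) → F :=
  fun i j => ∑ t, c i t * algebraMap Fq F (A i t j)


-- auxiliary: rank of span of values ≤ number of nonzero entries
lemma aux_finrank_le {Fq F : Type*} [Field Fq] [Field F] [Algebra Fq F] [Fintype F] [DecidableEq F]
    {n : ℕ} (v : Fin n → F) :
    finrank Fq (span Fq (Set.range v)) ≤
      (Finset.univ.filter fun j => v j ≠ 0).card := by
  classical
  set s : Finset F := (Finset.univ.filter fun j => v j ≠ 0).image v with hs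
  have h1 : span Fq (Set.range v) ≤ span Fq (s : Set F) := by
    rw [span_le]
    rintro x ⟨j, rfl⟩
    by_cases h : v j = 0
    · simp [h]
    · exact subset_span (by simp [hs]; exact ⟨j, h, rfl⟩)
  calc finrank Fq (span Fq (Set.range v)) ≤ finrank Fq (span Fq (s : Set F)) :=
        Submodule.finrank_mono h1
    _ ≤ s.card := finrank_span_finset_le_card s
    _ ≤ _ := Finset.card_image_le

-- srWeight positive for nonzero vectors
lemma aux_srWeight_pos {Fq F : Type*} [Field Fq] [Field F] [Algebra Fq F] [Fintype F]
    {g : ℕ} {r : Fin g → ℕ} {c : ∀ i : Fin g, Fin (r i) → F} (h : c ≠ 0) :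
    1 ≤ srWeight Fq c := by
  classical
  have : ∃ i j, c i j ≠ 0 := by
    by_contra hc
    push_neg at hc
    exact h (by funext i j; simpa using hc i j)
  obtain ⟨i, j, hij⟩ := this
  have h1 : 1 ≤ finrank Fq (span Fq (Set.range (c i))) := by
    have hle : span Fq {c i j} ≤ span Fq (Set.range (c i)) :=
      span_mono (Set.singleton_subset_iff.mpr ⟨j, rfl⟩)
    have := Submodule.finrank_mono hle
    rwa [finrank_span_singleton hij] at this
  exact le_trans h1 (Finset.single_le_sum (f := fun i =>
    finrank Fq (span Fq (Set.range (c i)))) (fun _ _ => Nat.zero_le _) (Finset.mem_univ i))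

/-- sum-rank Singleton bound `|C| ≤ q^{m(N − d_SR(C) + 1)}`. -/
theorem sum_rank_singleton_bound
    {Fq F : Type*} [Field Fq] [Fintype Fq] [Field F] [Fintype F] [Algebra Fq F]
    {g : ℕ} {r : Fin g → ℕ} (C : Set (∀ i : Fin g, Fin (r i) → F)) (hC : C.Nontrivial) :
    Nat.card C ≤
      Fintype.card Fq ^ (Module.finrank Fq F * ((∑ i, r i) - srMinDist Fq C + 1)) := by
  classical
  set N := ∑ i, r i with hN
  set d := srMinDist Fq C with hd
  obtain ⟨a, ha, b, hb, hab⟩ := hC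
  have hsetne : {w | ∃ c ∈ C, ∃ e ∈ C, c ≠ e ∧ w = srWeight Fq (c - e)}.Nonempty :=
    ⟨srWeight Fq (a - b), a, ha, b, hb, hab, rfl⟩
  have hdInf : d = sInf {w | ∃ c ∈ C, ∃ e ∈ C, c ≠ e ∧ w = srWeight Fq (c - e)} := hd
  obtain ⟨c0, hc0, e0, he0, hne0, hw0⟩ := Nat.sInf_mem hsetne
  -- basic bound on srWeight by block Hamming weight
  have hsr_le_ham : ∀ c : ∀ i : Fin g, Fin (r i) → F,
      srWeight Fq c ≤ ∑ i, (Finset.univ.filter fun j => c i j ≠ 0).card := by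
    intro c
    exact Finset.sum_le_sum fun i _ => aux_finrank_le (c i)
  have hd1 : 1 ≤ d := by
    rw [hdInf, hw0]
    exact aux_srWeight_pos (sub_ne_zero.mpr hne0)
  have hdN : d ≤ N := by
    rw [hdInf, hw0, hN]
    refine le_trans (hsr_le_ham _) (Finset.sum_le_sum fun i _ => ?_)
    exact le_trans (Finset.card_filter_le _ _) (by simp)
  -- choose a set T of d - 1 coordinates
  have hcard_univ : (Finset.univ : Finset (Σ i : Fin g, Fin (r i))).card = N := by
    simp [Finset.card_univ, hN]
  obtain ⟨T, -, hT⟩ := Finset.exists_subset_card_eq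
    (s := (Finset.univ : Finset (Σ i : Fin g, Fin (r i)))) (n := d - 1) (by omega)
  -- the projection away from T is injective on C
  let f : C → ({x : Σ i : Fin g, Fin (r i) // x ∉ T} → F) :=
    fun c x => c.1 x.1.1 x.1.2
  have hfinj : Function.Injective f := by
    intro x y hxy
    by_contra hne
    have hxy1 : x.1 ≠ y.1 := fun h => hne (Subtype.ext h)
    have hmem : srWeight Fq (x.1 - y.1) ∈
        {w | ∃ c ∈ C, ∃ e ∈ C, c ≠ e ∧ w = srWeight Fq (c - e)} :=
      ⟨x.1, x.2, y.1, y.2, hxy1, rfl⟩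
    have hdle : d ≤ srWeight Fq (x.1 - y.1) := hdInf ▸ Nat.sInf_le hmem
    -- differing positions lie in T
    have hsub : (Finset.univ.sigma fun i =>
        Finset.univ.filter fun j => (x.1 - y.1) i j ≠ 0) ⊆ T := by
      intro p hp
      simp only [Finset.mem_sigma, Finset.mem_filter] at hp
      by_contra hpT
      have := congrFun hxy ⟨p, hpT⟩
      simp only [f] at this
      exact hp.2.2 (by simp [Pi.sub_apply, sub_eq_zero, this])
    have hham : srWeight Fq (x.1 - y.1) ≤ d - 1 := by
      refine le_trans (hsr_le_ham _) ?_
      rw [← Finset.card_sigma]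
      exact le_trans (Finset.card_le_card hsub) (le_of_eq hT)
    omega
  have hcard : Nat.card C ≤ Nat.card ({x : Σ i : Fin g, Fin (r i) // x ∉ T} → F) :=
    Nat.card_le_card_of_injective f hfinj
  have hcard2 : Nat.card ({x : Σ i : Fin g, Fin (r i) // x ∉ T} → F)
      = Fintype.card F ^ (N - (d - 1)) := by
    rw [Nat.card_eq_fintype_card, Fintype.card_fun,
      Fintype.card_subtype_compl, Fintype.card_coe, hT]
    congr 2
  have hF : Fintype.card F = Fintype.card Fq ^ Module.finrank Fq F :=
    card_eq_pow_finrank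
  calc Nat.card C ≤ Fintype.card F ^ (N - (d - 1)) := by rw [← hcard2]; exact hcard
    _ = Fintype.card Fq ^ (Module.finrank Fq F * (N - d + 1)) := by
        rw [hF, ← pow_mul]
        congr 1
        have : N - (d - 1) = N - d + 1 := by omega
        rw [this]
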